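/- arXiv:2408.16585 — 2 statements merged into one kernel-verified Lean document; each statement's English description precedes it below -/
import Mathlib

section
/- For nonnegative integers K, L and 0 ≤ q < 1, the probabilities P(s) := q^{(K-s)(L-s)} · [∏_{i=0}^{s-1} (1-q^{K-i})(1-q^{L-i})] / [∏_{i=1}^{s} (1-q^i)] sum to 1 over s = 0, 1, ..., min(K,L). -/
open Finset

/-- The one-point Mallows height probability
`q^{(K-s)(L-s)} ∏_{i=0}^{s-1}(1-q^{K-i})(1-q^{L-i}) / ∏_{i=1}^{s}(1-q^i)`. -/
noncomputable def mallowsHeightProb (q : ℝ) (K L s : ℕ) : ℝ :=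
  q ^ ((K - s) * (L - s))
    * (∏ i ∈ Finset.range s, (1 - q ^ (K - i)) * (1 - q ^ (L - i)))
    / ∏ i ∈ Finset.range s, (1 - q ^ (i + 1))



-- Pascal-type recursion for the q-products
lemma aRec (q : ℝ) : ∀ (K s : ℕ), s ≤ K →
    ∏ i ∈ range (s+1), (1 - q ^ (K + 1 - i)) =
      ∏ i ∈ range (s+1), (1 - q ^ (K - i))
        + q ^ (K - s) * (1 - q ^ (s+1)) * ∏ i ∈ range s, (1 - q ^ (K - i)) := by
  intro K s
  induction s with
  | zero =>
      intro _
      simp [pow_succ]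
      ring
  | succ s ih =>
      intro h
      have ih' := ih (by omega)
      rw [prod_range_succ (fun i => (1 - q ^ (K + 1 - i))) (s+1), ih']
      rw [prod_range_succ (fun i => (1 - q ^ (K - i))) (s+1)]
      rw [prod_range_succ (fun i => (1 - q ^ (K - i))) s]
      have e1 : K + 1 - (s+1) = K - s := by omega
      have e2 : K - s = (K - (s+1)) + 1 := by omega
      rw [e1, e2]
      generalize (K - (s+1)) = a
      rw [pow_succ q a, pow_succ q (s+1)]
      ring

lemma denom_ne (q : ℝ) (hq0 : 0 ≤ q) (hq1 : q < 1) (s : ℕ) :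
    (∏ i ∈ range s, (1 - q ^ (i + 1))) ≠ 0 := by
  refine ne_of_gt (Finset.prod_pos fun i _ => ?_)
  have := pow_lt_one₀ hq0 hq1 (n := i+1) (by omega)
  linarith

lemma fac_ne (q : ℝ) (hq0 : 0 ≤ q) (hq1 : q < 1) (s : ℕ) : (1 - q ^ (s + 1)) ≠ 0 := by
  have := pow_lt_one₀ hq0 hq1 (n := s+1) (by omega)
  linarith

lemma term_rec (q : ℝ) (hq0 : 0 ≤ q) (hq1 : q < 1) (K L s : ℕ)
    (hsK : s + 1 ≤ K) (hsL : s + 1 ≤ L) :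
    mallowsHeightProb q (K+1) L (s+1) =
      q ^ (L - (s+1)) * mallowsHeightProb q K L (s+1)
        + (1 - q ^ (L - s)) * mallowsHeightProb q K L s := by
  simp only [mallowsHeightProb, prod_mul_distrib]
  rw [show K + 1 - (s+1) = K - s from by omega]
  rw [aRec q K s (by omega)]
  rw [prod_range_succ (fun i => (1 - q ^ (K - i))) s]
  rw [prod_range_succ (fun i => (1 - q ^ (L - i))) s]
  rw [prod_range_succ (fun i => (1 - q ^ (i + 1))) s]
  have e1 : K - s = (K - (s+1)) + 1 := by omega
  have e2 : L - s = (L - (s+1)) + 1 := by omega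
  rw [e1, e2]
  generalize (K - (s+1)) = a
  generalize (L - (s+1)) = b
  rw [show (a+1)*b = a*b + b from by ring, show (a+1)*(b+1) = a*b + a + b + 1 from by ring]
  have hD := denom_ne q hq0 hq1 s
  have hF := fac_ne q hq0 hq1 s
  field_simp
  ring

lemma diag_eq (q : ℝ) (hq0 : 0 ≤ q) (hq1 : q < 1) (K L : ℕ) :
    mallowsHeightProb q K L K = ∏ i ∈ range K, (1 - q ^ (L - i)) := by
  simp only [mallowsHeightProb, prod_mul_distrib, Nat.sub_self, Nat.zero_mul, pow_zero, one_mul]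
  have h1 : ∏ i ∈ range K, (1 - q ^ (K - i)) = ∏ i ∈ range K, (1 - q ^ (i + 1)) := by
    rw [← Finset.prod_range_reflect (fun j => (1 - q ^ (j + 1))) K]
    refine Finset.prod_congr rfl fun i hi => ?_
    have : K - 1 - i + 1 = K - i := by
      have := Finset.mem_range.mp hi; omega
    rw [this]
  rw [h1, mul_comm, mul_div_assoc, div_self (denom_ne q hq0 hq1 K), mul_one]

lemma top_rec (q : ℝ) (hq0 : 0 ≤ q) (hq1 : q < 1) (K L : ℕ) :
    mallowsHeightProb q (K+1) L (K+1) = (1 - q ^ (L - K)) * mallowsHeightProb q K L K := by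
  rw [diag_eq q hq0 hq1, diag_eq q hq0 hq1, prod_range_succ]
  ring

lemma symm_eq (q : ℝ) (K L s : ℕ) :
    mallowsHeightProb q K L s = mallowsHeightProb q L K s := by
  simp only [mallowsHeightProb, Nat.mul_comm (K - s)]
  congr 2
  exact Finset.prod_congr rfl fun i _ => mul_comm _ _

lemma sum_eq_one_of_le (q : ℝ) (hq0 : 0 ≤ q) (hq1 : q < 1) :
    ∀ K L : ℕ, K ≤ L → ∑ s ∈ range (K + 1), mallowsHeightProb q K L s = 1 := by
  intro K
  induction K with
  | zero => intro L _; simp [mallowsHeightProb]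
  | succ K ih =>
      intro L hKL
      have hK : K ≤ L := by omega
      rw [Finset.sum_range_succ' (fun s => mallowsHeightProb q (K+1) L s) (K+1)]
      rw [Finset.sum_range_succ (fun s => mallowsHeightProb q (K+1) L (s+1)) K]
      have hterm : ∀ s ∈ range K, mallowsHeightProb q (K+1) L (s+1)
          = q ^ (L - (s+1)) * mallowsHeightProb q K L (s+1)
            + (1 - q ^ (L - s)) * mallowsHeightProb q K L s := by
        intro s hs
        have hsK : s + 1 ≤ K := Finset.mem_range.mp hs
        exact term_rec q hq0 hq1 K L s hsK (by omega)
      rw [Finset.sum_congr rfl hterm, top_rec q hq0 hq1, Finset.sum_add_distrib]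
      have h0 : mallowsHeightProb q (K+1) L 0 = q ^ (L - 0) * mallowsHeightProb q K L 0 := by
        simp only [mallowsHeightProb, Nat.sub_zero, prod_range_zero, mul_one, div_one]
        rw [← pow_add]
        congr 1
        ring
      rw [h0]
      have e1 : (∑ s ∈ range K, q ^ (L - (s+1)) * mallowsHeightProb q K L (s+1))
            + q ^ (L - 0) * mallowsHeightProb q K L 0
          = ∑ s ∈ range (K+1), q ^ (L - s) * mallowsHeightProb q K L s := by
        rw [Finset.sum_range_succ' (fun s => q ^ (L - s) * mallowsHeightProb q K L s) K]
      have e2 : (∑ s ∈ range K, (1 - q ^ (L - s)) * mallowsHeightProb q K L s)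
            + (1 - q ^ (L - K)) * mallowsHeightProb q K L K
          = ∑ s ∈ range (K+1), (1 - q ^ (L - s)) * mallowsHeightProb q K L s := by
        rw [Finset.sum_range_succ]
      have := ih L hK
      calc (∑ s ∈ range K, q ^ (L - (s+1)) * mallowsHeightProb q K L (s+1))
              + (∑ s ∈ range K, (1 - q ^ (L - s)) * mallowsHeightProb q K L s)
              + (1 - q ^ (L - K)) * mallowsHeightProb q K L K
              + q ^ (L - 0) * mallowsHeightProb q K L 0
          = (∑ s ∈ range (K+1), q ^ (L - s) * mallowsHeightProb q K L s)
              + (∑ s ∈ range (K+1), (1 - q ^ (L - s)) * mallowsHeightProb q K L s) := by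
            rw [← e1, ← e2]; ring
        _ = ∑ s ∈ range (K+1), mallowsHeightProb q K L s := by
            rw [← Finset.sum_add_distrib]
            exact Finset.sum_congr rfl fun s _ => by ring
        _ = 1 := this

/-- The one-point Mallows height probabilities sum to `1` over `s = 0, 1, …, min(K,L)`. -/
theorem mallowsHeightProb_sum_eq_one (q : ℝ) (hq0 : 0 ≤ q) (hq1 : q < 1) (K L : ℕ) :
    ∑ s ∈ Finset.range (min K L + 1), mallowsHeightProb q K L s = 1 := by
  rcases le_total K L with h | h
  · rw [min_eq_left h]; exact sum_eq_one_of_le q hq0 hq1 K L h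
  · rw [min_eq_right h]
    rw [Finset.sum_congr rfl fun s _ => symm_eq q K L s]
    exact sum_eq_one_of_le q hq0 hq1 L K h
end

section
/- The multi-point Mallows height function factorizes: for the Mallows-random permutation w of ℕ, nonnegative integers K, 0 ≤ L_1 ≤ ... ≤ L_r, and nonnegative integers s_1, ..., s_r with s_1 + ... + s_r ≤ K, the probability that f_{ℕ,K,L_1} = s_1 and f_{ℕ,K,L_j} − f_{ℕ,K,L_{j-1}} = s_j for j = 2,...,r equals ∏_{j=1}^{r} P(f_{ℕ, K − s_1 − ... − s_{j-1}, L_j − L_{j-1}} = s_j) (with L_0 = 0), where each factor is given by the explicit one-point formula. -/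
open MeasureTheory Finset

/-- The Gnedin–Olshanski sampling algorithm producing a Mallows-distributed random bijection
`ℕ → ℕ` (0-indexed) from a sequence of (iid geometric) values `ξ`. -/
noncomputable def gnedinOlshanski (ξ : ℕ → ℕ) : ℕ → ℕ :=
  fun k => Nat.nth (fun m => ∀ j, (h : j < k) → gnedinOlshanski ξ j ≠ m) (ξ k)
  termination_by k => k

set_option linter.unusedSectionVars false

namespace MallowsProof

def chain (ξ : ℕ → ℕ) (K : ℕ) : ℕ → ℕ
  | 0 => 0
  | m + 1 => chain ξ K m + (if ξ m < K - chain ξ K m then 1 else 0)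

lemma chain_congr {ξ ξ' : ℕ → ℕ} {K : ℕ} :
    ∀ {m}, (∀ t, t < m → ξ t = ξ' t) → chain ξ K m = chain ξ' K m
  | 0, _ => rfl
  | m + 1, h => by
    have ih := chain_congr (K := K) (fun t ht => h t (Nat.lt_succ_of_lt ht))
    simp only [chain, ih, h m (Nat.lt_succ_self m)]

lemma chain_le (ξ : ℕ → ℕ) (K : ℕ) : ∀ m, chain ξ K m ≤ K
  | 0 => Nat.zero_le K
  | m + 1 => by
    have h := chain_le ξ K m
    by_cases hc : ξ m < K - chain ξ K m
    · simp only [chain, if_pos hc]; omega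
    · simp only [chain, if_neg hc]; omega

lemma chain_add (ξ : ℕ → ℕ) (K b : ℕ) :
    ∀ m, chain ξ K (b + m)
      = chain ξ K b + chain (fun t => ξ (b + t)) (K - chain ξ K b) m
  | 0 => rfl
  | m + 1 => by
    have ih := chain_add ξ K b m
    rw [show b + (m + 1) = (b + m) + 1 from rfl]
    simp only [chain, ih]
    rw [show K - (chain ξ K b + chain (fun t => ξ (b + t)) (K - chain ξ K b) m)
        = K - chain ξ K b - chain (fun t => ξ (b + t)) (K - chain ξ K b) m from by omega]
    omega

lemma gnedin_eq (ξ : ℕ → ℕ) (k : ℕ) :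
    gnedinOlshanski ξ k
      = Nat.nth (fun m => ∀ j, j < k → gnedinOlshanski ξ j ≠ m) (ξ k) := by
  rw [gnedinOlshanski]

lemma unused_infinite (ξ : ℕ → ℕ) (k : ℕ) :
    {m | ∀ j, j < k → gnedinOlshanski ξ j ≠ m}.Infinite := by
  have hsub : {m | ∀ j, j < k → gnedinOlshanski ξ j ≠ m}ᶜ
      ⊆ gnedinOlshanski ξ '' (Set.Iio k) := by
    intro m hm
    simp only [Set.mem_compl_iff, Set.mem_setOf_eq, not_forall] at hm
    obtain ⟨j, hj, hjm⟩ := hm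
    exact ⟨j, hj, not_not.mp hjm⟩
  have hfin : ({m | ∀ j, j < k → gnedinOlshanski ξ j ≠ m}ᶜ).Finite :=
    Set.Finite.subset ((Set.finite_Iio k).image _) hsub
  have := hfin.infinite_compl
  rwa [compl_compl] at this

lemma gnedin_ne (ξ : ℕ → ℕ) {j k : ℕ} (h : j < k) :
    gnedinOlshanski ξ j ≠ gnedinOlshanski ξ k := by
  have hp := Nat.nth_mem_of_infinite (unused_infinite ξ k) (ξ k)
  rw [gnedin_eq ξ k]
  exact hp j h

lemma gnedin_lt_iff (ξ : ℕ → ℕ) (K k : ℕ) :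
    gnedinOlshanski ξ k < K
      ↔ ξ k < K - #((range k).filter fun i => gnedinOlshanski ξ i < K) := by
  classical
  set p := fun m => ∀ j, j < k → gnedinOlshanski ξ j ≠ m with hp
  have hinf : (setOf p).Infinite := unused_infinite ξ k
  have hgc := Nat.gc_count_nth hinf
  have h1 : gnedinOlshanski ξ k < K ↔ ξ k < Nat.count p K := by
    rw [gnedin_eq ξ k]
    rw [← not_le, ← not_le, ← hgc K (ξ k)]
  have hcardeq : #((range k).filter fun i => gnedinOlshanski ξ i < K)
      = #((range K).filter fun m => ¬ p m) := by
    apply Finset.card_bij (fun i _ => gnedinOlshanski ξ i)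
    · intro i hi
      simp only [mem_filter, mem_range] at hi
      simp only [mem_filter, mem_range, hp, not_forall]
      exact ⟨hi.2, i, hi.1, by simp⟩
    · intro i hi i' hi' hh
      simp only [mem_filter, mem_range] at hi hi'
      by_contra hne
      rcases Nat.lt_or_ge i i' with hlt | hge
      · exact gnedin_ne ξ hlt hh
      · exact gnedin_ne ξ (by omega : i' < i) hh.symm
    · intro m hm
      simp only [mem_filter, mem_range, hp, not_forall] at hm
      obtain ⟨hmK, j, hj, hjm⟩ := hm
      refine ⟨j, ?_, not_not.mp hjm⟩
      simp only [mem_filter, mem_range]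
      exact ⟨hj, by rw [not_not.mp hjm]; exact hmK⟩
  have hcount : Nat.count p K
      = K - #((range k).filter fun i => gnedinOlshanski ξ i < K) := by
    rw [Nat.count_eq_card_filter_range, hcardeq]
    have := Finset.card_filter_add_card_filter_not (s := range K) (p := p)
    rw [card_range] at this
    have h3 : #(filter (fun x => p x) (range K)) = #(filter p (range K)) := rfl
    omega
  rw [h1, hcount]

lemma card_filter_eq_chain (ξ : ℕ → ℕ) (K : ℕ) :
    ∀ L, #((range L).filter fun i => gnedinOlshanski ξ i < K) = chain ξ K L
  | 0 => rfl
  | L + 1 => by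
    have ih := card_filter_eq_chain ξ K L
    have key := gnedin_lt_iff ξ K L
    rw [range_add_one, filter_insert]
    by_cases h : gnedinOlshanski ξ L < K
    · rw [if_pos h, card_insert_of_notMem (fun hc => by simp at hc), ih]
      have : ξ L < K - chain ξ K L := ih ▸ key.mp h
      simp only [chain, if_pos this]
    · rw [if_neg h, ih]
      have : ¬ ξ L < K - chain ξ K L := fun hc => h (key.mpr (ih ▸ hc))
      simp only [chain, if_neg this]
      omega


lemma one_sub_pow_nonneg {q : ℝ} (hq0 : 0 ≤ q) (hq1 : q < 1) (n : ℕ) : 0 ≤ 1 - q ^ n := by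
  have := pow_le_one₀ hq0 hq1.le (n := n)
  linarith

lemma one_sub_pow_pos {q : ℝ} (hq0 : 0 ≤ q) (hq1 : q < 1) (n : ℕ) : 0 < 1 - q ^ (n + 1) := by
  have : q ^ (n + 1) < 1 := pow_lt_one₀ hq0 hq1 (Nat.succ_ne_zero n)
  linarith

lemma denom_pos {q : ℝ} (hq0 : 0 ≤ q) (hq1 : q < 1) (n : ℕ) :
    0 < ∏ i ∈ Finset.range n, (1 - q ^ (i + 1)) :=
  Finset.prod_pos fun i _ => one_sub_pow_pos hq0 hq1 i

lemma M_nonneg {q : ℝ} (hq0 : 0 ≤ q) (hq1 : q < 1) (K L s : ℕ) :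
    0 ≤ mallowsHeightProb q K L s := by
  unfold mallowsHeightProb
  apply div_nonneg
  · apply mul_nonneg (pow_nonneg hq0 _)
    exact Finset.prod_nonneg fun i _ =>
      mul_nonneg (one_sub_pow_nonneg hq0 hq1 _) (one_sub_pow_nonneg hq0 hq1 _)
  · exact (denom_pos hq0 hq1 s).le

lemma M_zero_of_lt {q : ℝ} {K L s : ℕ} (h : L < s) : mallowsHeightProb q K L s = 0 := by
  unfold mallowsHeightProb
  rw [Finset.prod_eq_zero (Finset.mem_range.mpr h)
    (by rw [Nat.sub_self]; ring)]
  simp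

lemma M_zero_of_lt' {q : ℝ} {K L s : ℕ} (h : K < s) : mallowsHeightProb q K L s = 0 := by
  unfold mallowsHeightProb
  rw [Finset.prod_eq_zero (Finset.mem_range.mpr h)
    (by rw [Nat.sub_self]; ring)]
  simp

lemma prod_reflect {q : ℝ} (n : ℕ) :
    ∏ i ∈ Finset.range n, (1 - q ^ (n - i)) = ∏ i ∈ Finset.range n, (1 - q ^ (i + 1)) := by
  rw [← Finset.prod_range_reflect (fun i => 1 - q ^ (i + 1)) n]
  apply Finset.prod_congr rfl
  intro i hi
  rw [Finset.mem_range] at hi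
  congr 2
  omega

lemma M_rec {q : ℝ} (hq0 : 0 ≤ q) (hq1 : q < 1) (K m s : ℕ) :
    mallowsHeightProb q K (m + 1) s
      = mallowsHeightProb q K m s * q ^ (K - s)
        + (if s = 0 then 0
           else mallowsHeightProb q K m (s - 1) * (1 - q ^ (K - (s - 1)))) := by
  have hD : ∀ n, (∏ i ∈ Finset.range n, (1 - q ^ (i + 1))) ≠ 0 :=
    fun n => (denom_pos hq0 hq1 n).ne'
  rcases s with _ | s'
  · simp only [if_pos rfl, add_zero, Nat.sub_zero, mallowsHeightProb,
      Finset.range_zero, Finset.prod_empty, mul_one, div_one]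
    rw [Nat.mul_succ, pow_add]
    simp
  · rw [if_neg (Nat.succ_ne_zero s'), Nat.succ_sub_one]
    by_cases h1 : m < s' + 1
    · rcases Nat.lt_or_ge m s' with h2 | h2
      · -- s' > m : everything zero
        rw [M_zero_of_lt (by omega), M_zero_of_lt (by omega), M_zero_of_lt h2]
        ring
      · -- m = s' : boundary case
        have hm : m = s' := by omega
        subst hm
        by_cases hK : K < m + 1
        · rw [M_zero_of_lt' hK, M_zero_of_lt' hK]
          have : K - m = 0 := by omega
          rw [this, pow_zero]
          ring
        · -- m + 1 ≤ K
          obtain ⟨a, ha⟩ : ∃ a, K = m + 1 + a := ⟨K - (m + 1), by omega⟩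
          rw [M_zero_of_lt (Nat.lt_succ_self m)]
          unfold mallowsHeightProb
          rw [show (m + 1) - (m + 1) = 0 from by omega, Nat.mul_zero, pow_zero,
            show m - m = 0 from by omega, Nat.mul_zero, pow_zero]
          rw [Finset.prod_mul_distrib, Finset.prod_mul_distrib]
          rw [show ∏ i ∈ Finset.range (m+1), (1 - q ^ ((m+1) - i))
              = ∏ i ∈ Finset.range (m+1), (1 - q ^ (i+1)) from prod_reflect (m+1),
            show ∏ i ∈ Finset.range m, (1 - q ^ (m - i))
              = ∏ i ∈ Finset.range m, (1 - q ^ (i+1)) from prod_reflect m]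
          rw [Finset.prod_range_succ (fun i => 1 - q ^ (K - i))]
          rw [show K - m = a + 1 from by omega]
          have d1 := hD (m + 1)
          have d2 := hD m
          field_simp
          ring
    · -- s' + 1 ≤ m
      by_cases hK : K < s' + 1
      · rw [M_zero_of_lt' (by omega), M_zero_of_lt' (by omega)]
        have : K - s' = 0 := by omega
        rw [this, pow_zero]
        ring
      · obtain ⟨a, ha⟩ : ∃ a, K = s' + 1 + a := ⟨K - (s' + 1), by omega⟩
        obtain ⟨b, hb⟩ : ∃ b, m = s' + 1 + b := ⟨m - (s' + 1), by omega⟩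
        unfold mallowsHeightProb
        rw [show K - (s' + 1) = a from by omega, show K - s' = a + 1 from by omega,
          show (m + 1) - (s' + 1) = b + 1 from by omega,
          show m - (s' + 1) = b from by omega, show m - s' = b + 1 from by omega]
        -- split products
        rw [show (∏ i ∈ Finset.range (s'+1), (1 - q ^ (K - i)) * (1 - q ^ ((m+1) - i)))
            = ((∏ i ∈ Finset.range s', (1 - q ^ (K - i)) * (1 - q ^ (m - i))))
              * ((1 - q ^ (a + 1)) * (1 - q ^ (m + 1))) from ?_,
          show (∏ i ∈ Finset.range (s'+1), (1 - q ^ (K - i)) * (1 - q ^ (m - i)))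
            = ((∏ i ∈ Finset.range s', (1 - q ^ (K - i)) * (1 - q ^ (m - i))))
              * ((1 - q ^ (a + 1)) * (1 - q ^ (b + 1))) from ?_,
          Finset.prod_range_succ (fun i => 1 - q ^ (i + 1))]
        · have hm1 : m + 1 = s' + 1 + (b + 1) := by omega
          rw [hm1]
          have e1 : a * (b + 1) = a * b + a := by ring
          have e2 : (a + 1) * (b + 1) = a * b + (a + (b + 1)) := by ring
          rw [e1, e2]
          have d1 := hD s'
          have d2 := one_sub_pow_pos hq0 hq1 s' |>.ne'
          field_simp
          ring
        · -- second product split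
          rw [Finset.prod_range_succ]
          rw [show K - s' = a + 1 from by omega, show m - s' = b + 1 from by omega]
        · -- first product split (shift)
          rw [Finset.prod_mul_distrib, Finset.prod_mul_distrib,
            Finset.prod_range_succ (fun i => 1 - q ^ (K - i)),
            Finset.prod_range_succ' (fun i => 1 - q ^ ((m + 1) - i))]
          rw [show K - s' = a + 1 from by omega]
          have : ∀ i, (m + 1) - (i + 1) = m - i := fun i => by omega
          simp only [this, Nat.sub_zero]
          ring


section Measure

variable {Ω : Type*} [MeasurableSpace Ω] (μ : Measure Ω) [IsProbabilityMeasure μ]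
  {q : ℝ} (ξ : ℕ → Ω → ℕ)

lemma tuple_measurable (hmeas : ∀ i, Measurable (ξ i)) (S : Finset ℕ) :
    Measurable (fun ω => fun i : S => ξ i ω) :=
  measurable_pi_lambda _ fun i => hmeas i

lemma event_measurable (hmeas : ∀ i, Measurable (ξ i)) (S : Finset ℕ)
    (A : Set ((i : S) → ℕ)) :
    MeasurableSet ((fun ω => fun i : S => ξ i ω) ⁻¹' A) :=
  tuple_measurable ξ hmeas S .of_discrete

lemma measure_inter_tuple
    (hmeas : ∀ i, Measurable (ξ i))
    (hindep : ProbabilityTheory.iIndepFun ξ μ)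
    (S T : Finset ℕ) (hST : Disjoint S T)
    (A : Set ((i : S) → ℕ)) (B : Set ((i : T) → ℕ)) :
    μ ((fun ω => fun i : S => ξ i ω) ⁻¹' A ∩ (fun ω => fun i : T => ξ i ω) ⁻¹' B)
      = μ ((fun ω => fun i : S => ξ i ω) ⁻¹' A)
        * μ ((fun ω => fun i : T => ξ i ω) ⁻¹' B) :=
  (hindep.indepFun_finset S T hST hmeas).measure_inter_preimage_eq_mul
    A B .of_discrete .of_discrete

lemma measure_lt (hmeas : ∀ i, Measurable (ξ i)) (hq0 : 0 ≤ q) (hq1 : q < 1)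
    (hgeom : ∀ i n, μ {ω | ξ i ω = n} = ENNReal.ofReal (q ^ n * (1 - q)))
    (i t : ℕ) :
    μ {ω | ξ i ω < t} = ENNReal.ofReal (1 - q ^ t) := by
  have hset : {ω | ξ i ω < t} = ⋃ n ∈ Finset.range t, {ω | ξ i ω = n} := by
    ext ω
    simp
  rw [hset, measure_biUnion_finset ?_ ?_]
  · rw [Finset.sum_congr rfl (fun n _ => hgeom i n),
      ← ENNReal.ofReal_sum_of_nonneg (fun n _ =>
        mul_nonneg (pow_nonneg hq0 n) (by linarith))]
    congr 1
    rw [← Finset.sum_mul]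
    have := geom_sum_mul q t
    nlinarith [this]
  · intro n _ n' _ hnn'
    simp only [Set.disjoint_left, Set.mem_setOf_eq]
    intro ω h h'
    exact hnn' (h ▸ h')
  · intro n _
    exact hmeas i (measurableSet_singleton n)

lemma measure_not_lt (hmeas : ∀ i, Measurable (ξ i)) (hq0 : 0 ≤ q) (hq1 : q < 1)
    (hgeom : ∀ i n, μ {ω | ξ i ω = n} = ENNReal.ofReal (q ^ n * (1 - q)))
    (i t : ℕ) :
    μ {ω | ¬ ξ i ω < t} = ENNReal.ofReal (q ^ t) := by
  have hms : MeasurableSet {ω | ξ i ω < t} :=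
    hmeas i (MeasurableSet.of_discrete (s := {n | n < t}))
  have hc : {ω | ¬ ξ i ω < t} = {ω | ξ i ω < t}ᶜ := rfl
  rw [hc, measure_compl hms (measure_ne_top μ _), measure_univ,
    measure_lt μ ξ hmeas hq0 hq1 hgeom i t]
  have h1 : (1 : ENNReal) = ENNReal.ofReal (1 - q ^ t) + ENNReal.ofReal (q ^ t) := by
    rw [← ENNReal.ofReal_add (by
        have := pow_le_one₀ hq0 hq1.le (n := t); linarith) (pow_nonneg hq0 t)]
    norm_num
  rw [h1, ENNReal.add_sub_cancel_left ENNReal.ofReal_ne_top]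

lemma chain_event_eq (b m K' c : ℕ) :
    {ω | chain (fun t => ξ (b + t) ω) K' m = c}
      = (fun ω => fun i : (Finset.Ico b (b + m)) => ξ i ω) ⁻¹'
        {v | chain (fun t => if h : b + t ∈ Finset.Ico b (b + m) then v ⟨b + t, h⟩ else 0)
              K' m = c} := by
  have key : ∀ ω : Ω, chain (fun t =>
      if h : b + t ∈ Finset.Ico b (b + m)
      then (fun i : (Finset.Ico b (b + m)) => ξ i ω) ⟨b + t, h⟩ else 0) K' m
      = chain (fun t => ξ (b + t) ω) K' m := by
    intro ω
    apply chain_congr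
    intro t ht
    rw [dif_pos (by simp only [Finset.mem_Ico]; omega)]
  ext ω
  simp only [Set.mem_preimage, Set.mem_setOf_eq, key ω]

lemma onePoint (hmeas : ∀ i, Measurable (ξ i)) (hq0 : 0 ≤ q) (hq1 : q < 1)
    (hindep : ProbabilityTheory.iIndepFun ξ μ)
    (hgeom : ∀ i n, μ {ω | ξ i ω = n} = ENNReal.ofReal (q ^ n * (1 - q)))
    (b K' : ℕ) :
    ∀ m s, μ {ω | chain (fun t => ξ (b + t) ω) K' m = s}
      = ENNReal.ofReal (mallowsHeightProb q K' m s)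
  | 0, 0 => by
    have h0 : {ω : Ω | chain (fun t => ξ (b + t) ω) K' 0 = 0} = Set.univ := by
      ext ω; simp [chain]
    rw [h0, measure_univ]
    unfold mallowsHeightProb
    simp
  | 0, s + 1 => by
    have h0 : {ω : Ω | chain (fun t => ξ (b + t) ω) K' 0 = s + 1} = ∅ := by
      ext ω; simp [chain]
    rw [h0, measure_empty, M_zero_of_lt (Nat.succ_pos s), ENNReal.ofReal_zero]
  | m + 1, s => by
    have hIco : Disjoint (Finset.Ico b (b + m)) ({b + m} : Finset ℕ) := by simp
    have key : ∀ (c : ℕ) (P : ℕ → Prop),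
        μ ({ω | chain (fun t => ξ (b + t) ω) K' m = c} ∩ {ω | P (ξ (b + m) ω)})
          = μ {ω | chain (fun t => ξ (b + t) ω) K' m = c} * μ {ω | P (ξ (b + m) ω)} := by
      intro c P
      rw [chain_event_eq ξ b m K' c,
        show {ω | P (ξ (b + m) ω)} = (fun ω => fun i : ({b + m} : Finset ℕ) => ξ i ω) ⁻¹'
          {v | P (v ⟨b + m, by simp⟩)} from rfl]
      exact measure_inter_tuple μ ξ hmeas hindep _ _ hIco _ _
    have ih := onePoint hmeas hq0 hq1 hindep hgeom b K' m
    cases s with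
    | zero =>
      have hset : {ω : Ω | chain (fun t => ξ (b + t) ω) K' (m + 1) = 0}
          = {ω | chain (fun t => ξ (b + t) ω) K' m = 0}
            ∩ {ω | ¬ ξ (b + m) ω < K' - 0} := by
        ext ω
        simp only [Set.mem_setOf_eq, Set.mem_inter_iff, chain]
        by_cases h : ξ (b + m) ω < K' - chain (fun t => ξ (b + t) ω) K' m
        · rw [if_pos h]; omega
        · rw [if_neg h]; omega
      rw [hset, key 0 (fun n => ¬ n < K' - 0), ih 0,
        measure_not_lt μ ξ hmeas hq0 hq1 hgeom (b + m) (K' - 0),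
        ← ENNReal.ofReal_mul (M_nonneg hq0 hq1 _ _ _),
        M_rec hq0 hq1 K' m 0]
      simp
    | succ s =>
      have hset : {ω : Ω | chain (fun t => ξ (b + t) ω) K' (m + 1) = s + 1}
          = ({ω | chain (fun t => ξ (b + t) ω) K' m = s + 1}
              ∩ {ω | ¬ ξ (b + m) ω < K' - (s + 1)})
            ∪ ({ω | chain (fun t => ξ (b + t) ω) K' m = s}
              ∩ {ω | ξ (b + m) ω < K' - s}) := by
        ext ω
        simp only [Set.mem_setOf_eq, Set.mem_inter_iff, Set.mem_union, chain]
        by_cases h : ξ (b + m) ω < K' - chain (fun t => ξ (b + t) ω) K' m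
        · rw [if_pos h]; omega
        · rw [if_neg h]; omega
      have hdisj : Disjoint
          ({ω : Ω | chain (fun t => ξ (b + t) ω) K' m = s + 1}
            ∩ {ω | ¬ ξ (b + m) ω < K' - (s + 1)})
          ({ω : Ω | chain (fun t => ξ (b + t) ω) K' m = s}
            ∩ {ω | ξ (b + m) ω < K' - s}) := by
        rw [Set.disjoint_left]
        rintro ω ⟨h1, _⟩ ⟨h2, _⟩
        simp only [Set.mem_setOf_eq] at h1 h2
        omega
      have hmB : MeasurableSet
          ({ω : Ω | chain (fun t => ξ (b + t) ω) K' m = s}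
            ∩ {ω | ξ (b + m) ω < K' - s}) := by
        apply MeasurableSet.inter
        · rw [chain_event_eq ξ b m K' s]
          exact event_measurable ξ hmeas _ _
        · exact hmeas (b + m) (MeasurableSet.of_discrete (s := {n | n < K' - s}))
      rw [hset, measure_union hdisj hmB,
        key (s + 1) (fun n => ¬ n < K' - (s + 1)), key s (fun n => n < K' - s),
        ih (s + 1), ih s,
        measure_not_lt μ ξ hmeas hq0 hq1 hgeom (b + m) (K' - (s + 1)),
        measure_lt μ ξ hmeas hq0 hq1 hgeom (b + m) (K' - s),
        ← ENNReal.ofReal_mul (M_nonneg hq0 hq1 _ _ _),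
        ← ENNReal.ofReal_mul (M_nonneg hq0 hq1 _ _ _),
        ← ENNReal.ofReal_add
          (mul_nonneg (M_nonneg hq0 hq1 _ _ _) (pow_nonneg hq0 _))
          (mul_nonneg (M_nonneg hq0 hq1 _ _ _) (one_sub_pow_nonneg hq0 hq1 _)),
        M_rec hq0 hq1 K' m (s + 1), if_neg (Nat.succ_ne_zero s)]
      rfl

lemma L_le {L : ℕ → ℕ} {r : ℕ} (hmono : ∀ j, j + 1 < r → L j ≤ L (j + 1)) :
    ∀ (k j : ℕ), j ≤ k → k < r → L j ≤ L k
  | 0, j, hj, _ => by rw [Nat.le_zero.mp hj]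
  | k + 1, j, hj, hk => by
    by_cases h : j = k + 1
    · rw [h]
    · exact (L_le hmono k j (by omega) (by omega)).trans (hmono k hk)

lemma multi_event_eq (K : ℕ) (L s : ℕ → ℕ) (n b : ℕ) (hL : ∀ j, j < n → L j ≤ b) :
    {ω | ∀ j, j < n → chain (fun t => ξ t ω) K (L j) = ∑ i ∈ range (j + 1), s i}
      = (fun ω => fun i : (Finset.range b) => ξ i ω) ⁻¹'
        {v | ∀ j, j < n →
          chain (fun t => if h : t ∈ Finset.range b then v ⟨t, h⟩ else 0) K (L j)
            = ∑ i ∈ range (j + 1), s i} := by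
  ext ω
  simp only [Set.mem_preimage, Set.mem_setOf_eq]
  refine forall_congr' fun j => imp_congr_right fun hj => ?_
  rw [show chain (fun t =>
      if h : t ∈ Finset.range b then (fun i : (Finset.range b) => ξ i ω) ⟨t, h⟩ else 0)
        K (L j) = chain (fun t => ξ t ω) K (L j) from
    chain_congr fun t ht => by
      rw [dif_pos (Finset.mem_range.mpr (lt_of_lt_of_le ht (hL j hj)))]]

lemma multiPoint (hmeas : ∀ i, Measurable (ξ i)) (hq0 : 0 ≤ q) (hq1 : q < 1)
    (hindep : ProbabilityTheory.iIndepFun ξ μ)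
    (hgeom : ∀ i n, μ {ω | ξ i ω = n} = ENNReal.ofReal (q ^ n * (1 - q)))
    (K : ℕ) (L s : ℕ → ℕ) :
    ∀ r, (∀ j, j + 1 < r → L j ≤ L (j + 1)) →
      μ {ω | ∀ j, j < r → chain (fun t => ξ t ω) K (L j) = ∑ i ∈ range (j + 1), s i}
        = ENNReal.ofReal (∏ j ∈ range r,
            mallowsHeightProb q (K - ∑ i ∈ range j, s i)
              (L j - if j = 0 then 0 else L (j - 1)) (s j))
  | 0, _ => by simp
  | 1, _ => by
    have h1 : {ω : Ω | ∀ j, j < 1 →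
        chain (fun t => ξ t ω) K (L j) = ∑ i ∈ range (j + 1), s i}
        = {ω | chain (fun t => ξ (0 + t) ω) K (L 0) = s 0} := by
      ext ω
      simp [Nat.lt_one_iff, Finset.sum_range_one, Nat.zero_add]
    rw [h1, onePoint μ ξ hmeas hq0 hq1 hindep hgeom 0 K (L 0) (s 0),
      prod_range_one]
    norm_num
  | n + 2, hmono => by
    have hm' : ∀ j, j + 1 < n + 1 → L j ≤ L (j + 1) := fun j h => hmono j (by omega)
    have ih := multiPoint hmeas hq0 hq1 hindep hgeom K L s (n + 1) hm'
    have hLb : ∀ j, j < n + 1 → L j ≤ L n := fun j hj =>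
      L_le hmono n j (by omega) (by omega)
    have hbL : L n ≤ L (n + 1) := hmono n (by omega)
    have hset : {ω : Ω | ∀ j, j < n + 2 →
        chain (fun t => ξ t ω) K (L j) = ∑ i ∈ range (j + 1), s i}
        = {ω | ∀ j, j < n + 1 →
            chain (fun t => ξ t ω) K (L j) = ∑ i ∈ range (j + 1), s i}
          ∩ {ω | chain (fun t => ξ (L n + t) ω) (K - ∑ i ∈ range (n + 1), s i)
              (L (n + 1) - L n) = s (n + 1)} := by
      ext ω
      simp only [Set.mem_setOf_eq, Set.mem_inter_iff]
      constructor
      · intro h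
        have hb : chain (fun t => ξ t ω) K (L n) = ∑ i ∈ range (n + 1), s i :=
          h n (by omega)
        refine ⟨fun j hj => h j (by omega), ?_⟩
        have hadd := chain_add (fun t => ξ t ω) K (L n) (L (n + 1) - L n)
        rw [Nat.add_sub_cancel' hbL, hb] at hadd
        have h2 := h (n + 1) (by omega)
        rw [hadd, Finset.sum_range_succ s (n + 1)] at h2
        exact Nat.add_left_cancel h2
      · rintro ⟨h1, h2⟩ j hj
        by_cases hjn : j < n + 1
        · exact h1 j hjn
        · have hj2 : j = n + 1 := by omega
          subst hj2
          have hb : chain (fun t => ξ t ω) K (L n) = ∑ i ∈ range (n + 1), s i :=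
            h1 n (by omega)
          have hadd := chain_add (fun t => ξ t ω) K (L n) (L (n + 1) - L n)
          rw [Nat.add_sub_cancel' hbL, hb, h2] at hadd
          rw [hadd, Finset.sum_range_succ s (n + 1)]
    have hdisj : Disjoint (Finset.range (L n))
        (Finset.Ico (L n) (L n + (L (n + 1) - L n))) := by
      rw [Finset.disjoint_left]
      intro a ha hb
      rw [Finset.mem_range] at ha
      rw [Finset.mem_Ico] at hb
      omega
    rw [hset,
      multi_event_eq ξ K L s (n + 1) (L n) hLb,
      chain_event_eq ξ (L n) (L (n + 1) - L n)
        (K - ∑ i ∈ range (n + 1), s i) (s (n + 1)),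
      measure_inter_tuple μ ξ hmeas hindep _ _ hdisj _ _,
      ← multi_event_eq ξ K L s (n + 1) (L n) hLb,
      ← chain_event_eq ξ (L n) (L (n + 1) - L n)
        (K - ∑ i ∈ range (n + 1), s i) (s (n + 1)),
      ih,
      onePoint μ ξ hmeas hq0 hq1 hindep hgeom (L n)
        (K - ∑ i ∈ range (n + 1), s i) (L (n + 1) - L n) (s (n + 1)),
      ← ENNReal.ofReal_mul
        (Finset.prod_nonneg fun j _ => M_nonneg hq0 hq1 _ _ _)]
    congr 2
    rw [Finset.prod_range_succ (fun j => mallowsHeightProb q (K - ∑ i ∈ range j, s i)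
      (L j - if j = 0 then 0 else L (j - 1)) (s j)) (n + 1)]
    simp

end Measure

end MallowsProof

/-- Multi-point factorization of the Mallows height function: for a Mallows-random
permutation of `ℕ` (constructed from iid geometric variables `ξ` with
`P(ξ = i) = q^i(1-q)`), levels `0 ≤ L 0 ≤ L 1 ≤ … ≤ L (r-1)` and increments
`s 0, …, s (r-1)` with `∑ s j ≤ K`, the probability that for every `j < r` exactly
`∑_{i ≤ j} s i` of the positions `0,…,L j - 1` receive values `< K` equals
`∏_{j<r} P(f_{ℕ, K - ∑_{i<j} s i, L j - L (j-1)} = s j)` (with `L (-1) := 0`). -/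
theorem mallows_multi_point_height
    {Ω : Type*} [MeasurableSpace Ω] (μ : Measure Ω) [IsProbabilityMeasure μ]
    (q : ℝ) (hq0 : 0 ≤ q) (hq1 : q < 1)
    (ξ : ℕ → Ω → ℕ) (hmeas : ∀ i, Measurable (ξ i))
    (hindep : ProbabilityTheory.iIndepFun ξ μ)
    (hgeom : ∀ i n, μ {ω | ξ i ω = n} = ENNReal.ofReal (q ^ n * (1 - q)))
    (K r : ℕ) (L s : ℕ → ℕ)
    (hmono : ∀ j, j + 1 < r → L j ≤ L (j + 1))
    (hsum : ∑ i ∈ Finset.range r, s i ≤ K) :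
    μ {ω | ∀ j < r,
        ((Finset.range (L j)).filter
          (fun i => gnedinOlshanski (fun k => ξ k ω) i < K)).card
          = ∑ i ∈ Finset.range (j + 1), s i}
      = ENNReal.ofReal (∏ j ∈ Finset.range r,
          mallowsHeightProb q (K - ∑ i ∈ Finset.range j, s i)
            (L j - (if j = 0 then 0 else L (j - 1))) (s j)) := by
  have hev : {ω : Ω | ∀ j < r,
        ((Finset.range (L j)).filter
          (fun i => gnedinOlshanski (fun k => ξ k ω) i < K)).card
          = ∑ i ∈ Finset.range (j + 1), s i}
      = {ω | ∀ j, j < r → MallowsProof.chain (fun t => ξ t ω) K (L j)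
          = ∑ i ∈ Finset.range (j + 1), s i} := by
    ext ω
    simp only [Set.mem_setOf_eq]
    refine forall_congr' fun j => imp_congr_right fun hj => ?_
    rw [MallowsProof.card_filter_eq_chain]
  rw [hev]
  exact MallowsProof.multiPoint μ ξ hmeas hq0 hq1 hindep hgeom K L s r hmono
end
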